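/- Let c be a Coxeter element of S_n, and let U_c, D_c be the partition of [2, n−1] where j ∈ U_c if s_j appears before s_{j-1} in c and j ∈ D_c otherwise. Then a permutation π ∈ S_n is c-sortable if and only if π avoids the patterns jki for all j ∈ U_c and kij for all j ∈ D_c. -/

import Mathlib

/-- The permutation of `ℕ` given by a word in the adjacent transpositions:
the letter `m` stands for `s_m = (m, m+1)`. -/
def wordProd (L : List ℕ) : Equiv.Perm ℕ :=
  (L.map (fun m => Equiv.swap m (m + 1))).prod

/-- `L` is a reduced word of `π ∈ S_n`. -/
def IsRWord (n : ℕ) (π : Equiv.Perm ℕ) (L : List ℕ) : Prop :=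
  (∀ m ∈ L, m ∈ Finset.Icc 1 (n - 1)) ∧ wordProd L = π ∧
    ∀ L' : List ℕ, (∀ m ∈ L', m ∈ Finset.Icc 1 (n - 1)) → wordProd L' = π →
      L.length ≤ L'.length

/-- `π` is `c`-sortable for the Coxeter element given by the word `c`: the `c`-sorting
word of `π` (the lexicographically first reduced subword of `c^∞`) factors as
`L₁ L₂ ⋯ L_p` where each `L_i` is a subword of `c` and `L₁ ⊇ L₂ ⊇ ⋯ ⊇ L_p` as sets of
letters; since `c` has no repeated letters this means that `π` admits a reduced word
that is a concatenation of subwords of `c` with weakly decreasing supports. -/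
def CSortable (n : ℕ) (c : List ℕ) (π : Equiv.Perm ℕ) : Prop :=
  ∃ F : List (List ℕ), (∀ f ∈ F, f.Sublist c) ∧
    F.Chain' (fun f g => g.Sublist f) ∧ IsRWord n π F.flatten

namespace CSort

local infixl:50 " <+ " => List.Sublist

lemma wordProd_nil : wordProd [] = 1 := rfl

lemma wordProd_cons (a : ℕ) (L : List ℕ) :
    wordProd (a :: L) = Equiv.swap a (a+1) * wordProd L := by
  simp [wordProd]

lemma wordProd_append (L₁ L₂ : List ℕ) :
    wordProd (L₁ ++ L₂) = wordProd L₁ * wordProd L₂ := by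
  simp [wordProd]

lemma wordProd_concat (L : List ℕ) (a : ℕ) :
    wordProd (L ++ [a]) = wordProd L * Equiv.swap a (a+1) := by
  simp [wordProd]

/-- support predicate -/
def Supp (n : ℕ) (σ : Equiv.Perm ℕ) : Prop := ∀ x : ℕ, x ∉ Finset.Icc 1 n → σ x = x

lemma Supp.mem_of_mem {n : ℕ} {σ : Equiv.Perm ℕ} (h : Supp n σ) {x : ℕ}
    (hx : x ∈ Finset.Icc 1 n) : σ x ∈ Finset.Icc 1 n := by
  by_contra hc
  have h1 := h _ hc
  have h2 := σ.injective h1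
  rw [h2] at hc
  exact hc hx

lemma Supp.inv {n : ℕ} {σ : Equiv.Perm ℕ} (h : Supp n σ) : Supp n σ⁻¹ := by
  intro x hx
  have := h x hx
  nth_rewrite 1 [← this]
  simp

lemma Supp.one (n : ℕ) : Supp n 1 := fun x _ => rfl

lemma Supp.mul {n : ℕ} {σ τ : Equiv.Perm ℕ} (hσ : Supp n σ) (hτ : Supp n τ) :
    Supp n (σ * τ) := by
  intro x hx
  simp [Equiv.Perm.mul_apply, hτ x hx, hσ x hx]

lemma supp_swap {n m : ℕ} (h1 : 1 ≤ m) (h2 : m ≤ n - 1) :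
    Supp n (Equiv.swap m (m+1)) := by
  intro x hx
  simp only [Finset.mem_Icc, not_and, not_le] at hx
  apply Equiv.swap_apply_of_ne_of_ne
  · rintro rfl; omega
  · rintro rfl; omega

lemma supp_wordProd {n : ℕ} {L : List ℕ} (h : ∀ m ∈ L, m ∈ Finset.Icc 1 (n-1)) :
    Supp n (wordProd L) := by
  induction L with
  | nil => exact Supp.one n
  | cons a L ih =>
      rw [wordProd_cons]
      have ha := h a (by simp)
      simp only [Finset.mem_Icc] at ha
      exact Supp.mul (supp_swap ha.1 ha.2) (ih fun m hm => h m (by simp [hm]))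

/-- inversion set of σ (by values): pairs (u,v), u<v, with u appearing after v. -/
def InvSet (n : ℕ) (σ : Equiv.Perm ℕ) : Finset (ℕ × ℕ) :=
  (Finset.Icc 1 n ×ˢ Finset.Icc 1 n).filter (fun x => x.1 < x.2 ∧ σ⁻¹ x.2 < σ⁻¹ x.1)

def inver (n : ℕ) (σ : Equiv.Perm ℕ) : ℕ := (InvSet n σ).card

lemma mem_invSet {n : ℕ} {σ : Equiv.Perm ℕ} {u v : ℕ} :
    (u, v) ∈ InvSet n σ ↔ (u ∈ Finset.Icc 1 n ∧ v ∈ Finset.Icc 1 n) ∧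
      u < v ∧ σ⁻¹ v < σ⁻¹ u := by
  simp [InvSet, Finset.mem_filter, Finset.mem_product]

lemma inver_one (n : ℕ) : inver n 1 = 0 := by
  simp only [inver, Finset.card_eq_zero, InvSet]
  rw [Finset.filter_eq_empty_iff]
  rintro ⟨u, v⟩ _
  simp only [Equiv.Perm.one_def, Equiv.refl_symm]
  rintro ⟨h1, h2⟩
  simp at h2
  omega

lemma swap_lt_iff (j x y : ℕ) :
    Equiv.swap j (j+1) x < Equiv.swap j (j+1) y ↔
      ((x < y ∧ ¬(x = j ∧ y = j+1)) ∨ (x = j+1 ∧ y = j)) := by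
  simp only [Equiv.swap_apply_def]
  split_ifs <;> omega

lemma invSet_mul_swap_pos {n j : ℕ} {σ : Equiv.Perm ℕ} (hσ : Supp n σ)
    (h1 : 1 ≤ j) (h2 : j ≤ n - 1) (hlt : σ j < σ (j+1)) :
    InvSet n (σ * Equiv.swap j (j+1)) = insert (σ j, σ (j+1)) (InvSet n σ) ∧
      (σ j, σ (j+1)) ∉ InvSet n σ := by
  have hn : 2 ≤ n := by omega
  have hjm : j ∈ Finset.Icc 1 n := by simp; omega
  have hj1m : j + 1 ∈ Finset.Icc 1 n := by simp; omega
  have hsj := hσ.mem_of_mem hjm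
  have hsj1 := hσ.mem_of_mem hj1m
  have hinv : (σ * Equiv.swap j (j+1))⁻¹ = Equiv.swap j (j+1) * σ⁻¹ := by
    simp [mul_inv_rev, Equiv.swap_inv]
  have key : ∀ u v : ℕ, ((u, v) ∈ InvSet n (σ * Equiv.swap j (j+1)) ↔
      (u, v) = (σ j, σ (j+1)) ∨ (u, v) ∈ InvSet n σ) := by
    intro u v
    rw [mem_invSet, mem_invSet, hinv]
    simp only [Equiv.Perm.mul_apply]
    rw [swap_lt_iff]
    constructor
    · rintro ⟨hm, huv, hcase⟩
      rcases hcase with ⟨hlt', hne⟩ | ⟨e1, e2⟩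
      · exact Or.inr ⟨hm, huv, hlt'⟩
      · left
        have hv : v = σ (j+1) := by
          have := congrArg σ e1; simpa using this
        have hu : u = σ j := by
          have := congrArg σ e2; simpa using this
        rw [hu, hv]
    · rintro (he | ⟨hm, huv, hlt'⟩)
      · rw [Prod.ext_iff] at he
        obtain ⟨hu, hv⟩ := he
        subst hu; subst hv
        refine ⟨⟨hsj, hsj1⟩, hlt, Or.inr ⟨by simp, by simp⟩⟩
      · refine ⟨hm, huv, Or.inl ⟨hlt', ?_⟩⟩
        rintro ⟨e1, e2⟩
        have hv : v = σ j := by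
          have := congrArg σ e1; simpa using this
        have hu : u = σ (j+1) := by
          have := congrArg σ e2; simpa using this
        omega
  have hnotmem : (σ j, σ (j+1)) ∉ InvSet n σ := by
    rw [mem_invSet]
    rintro ⟨-, -, hlt'⟩
    simp at hlt'
  refine ⟨?_, hnotmem⟩
  ext ⟨u, v⟩
  rw [key, Finset.mem_insert]

lemma invSet_mul_swap_neg {n j : ℕ} {σ : Equiv.Perm ℕ} (hσ : Supp n σ)
    (h1 : 1 ≤ j) (h2 : j ≤ n - 1) (hlt : σ (j+1) < σ j) :
    InvSet n (σ * Equiv.swap j (j+1)) = (InvSet n σ).erase (σ (j+1), σ j) ∧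
      (σ (j+1), σ j) ∈ InvSet n σ := by
  have hn : 2 ≤ n := by omega
  have hjm : j ∈ Finset.Icc 1 n := by simp; omega
  have hj1m : j + 1 ∈ Finset.Icc 1 n := by simp; omega
  have hsj := hσ.mem_of_mem hjm
  have hsj1 := hσ.mem_of_mem hj1m
  have hinv : (σ * Equiv.swap j (j+1))⁻¹ = Equiv.swap j (j+1) * σ⁻¹ := by
    simp [mul_inv_rev, Equiv.swap_inv]
  have hmem : (σ (j+1), σ j) ∈ InvSet n σ := by
    rw [mem_invSet]
    exact ⟨⟨hsj1, hsj⟩, hlt, by simp⟩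
  refine ⟨?_, hmem⟩
  ext ⟨u, v⟩
  rw [Finset.mem_erase, mem_invSet, mem_invSet, hinv]
  simp only [Equiv.Perm.mul_apply]
  rw [swap_lt_iff]
  constructor
  · rintro ⟨hm, huv, hcase⟩
    rcases hcase with ⟨hlt', hne⟩ | ⟨e1, e2⟩
    · refine ⟨?_, hm, huv, hlt'⟩
      rintro he
      rw [Prod.ext_iff] at he
      obtain ⟨hu, hv⟩ := he
      simp only at hu hv
      apply hne
      constructor
      · rw [hv]; simp
      · rw [hu]; simp
    · exfalso
      have hv : v = σ (j+1) := by
        have := congrArg σ e1; simpa using this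
      have hu : u = σ j := by
        have := congrArg σ e2; simpa using this
      omega
  · rintro ⟨hne, hm, huv, hlt'⟩
    refine ⟨hm, huv, Or.inl ⟨hlt', ?_⟩⟩
    rintro ⟨e1, e2⟩
    apply hne
    have hv : v = σ j := by
      have := congrArg σ e1; simpa using this
    have hu : u = σ (j+1) := by
      have := congrArg σ e2; simpa using this
    rw [hu, hv]

lemma inver_mul_swap_pos {n j : ℕ} {σ : Equiv.Perm ℕ} (hσ : Supp n σ)
    (h1 : 1 ≤ j) (h2 : j ≤ n - 1) (hlt : σ j < σ (j+1)) :
    inver n (σ * Equiv.swap j (j+1)) = inver n σ + 1 := by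
  obtain ⟨he, hn⟩ := invSet_mul_swap_pos hσ h1 h2 hlt
  rw [inver, he, Finset.card_insert_of_notMem hn]; rfl

lemma inver_mul_swap_neg {n j : ℕ} {σ : Equiv.Perm ℕ} (hσ : Supp n σ)
    (h1 : 1 ≤ j) (h2 : j ≤ n - 1) (hlt : σ (j+1) < σ j) :
    inver n (σ * Equiv.swap j (j+1)) + 1 = inver n σ := by
  obtain ⟨he, hn⟩ := invSet_mul_swap_neg hσ h1 h2 hlt
  rw [inver, he, Finset.card_erase_of_mem hn]
  have : 1 ≤ (InvSet n σ).card := Finset.card_pos.mpr ⟨_, hn⟩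
  unfold inver
  omega

lemma inver_inv {n : ℕ} {σ : Equiv.Perm ℕ} (hσ : Supp n σ) :
    inver n σ⁻¹ = inver n σ := by
  unfold inver
  apply Finset.card_bij' (fun x _ => (σ x.2, σ x.1)) (fun x _ => (σ⁻¹ x.2, σ⁻¹ x.1))
  · rintro ⟨u, v⟩ hm
    rw [mem_invSet] at hm ⊢
    obtain ⟨⟨hu, hv⟩, huv, hlt⟩ := hm
    simp only [Equiv.Perm.inv_def, Equiv.symm_apply_apply] at hlt ⊢
    refine ⟨⟨hσ.mem_of_mem hv, hσ.mem_of_mem hu⟩, ?_, huv⟩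
    simpa using hlt
  · rintro ⟨u, v⟩ hm
    rw [mem_invSet] at hm ⊢
    obtain ⟨⟨hu, hv⟩, huv, hlt⟩ := hm
    refine ⟨⟨hσ.inv.mem_of_mem hv, hσ.inv.mem_of_mem hu⟩, hlt, by simpa using huv⟩
  · rintro ⟨u, v⟩ hm; simp
  · rintro ⟨u, v⟩ hm; simp

lemma inver_le_length {n : ℕ} (L : List ℕ) (h : ∀ m ∈ L, m ∈ Finset.Icc 1 (n-1)) :
    inver n (wordProd L) ≤ L.length := by
  induction L using List.reverseRecOn with
  | nil => simp [wordProd_nil, inver_one]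
  | append_singleton L j ih =>
    have hj : j ∈ Finset.Icc 1 (n-1) := h j (by simp)
    simp only [Finset.mem_Icc] at hj
    have hL : ∀ m ∈ L, m ∈ Finset.Icc 1 (n-1) := fun m hm => h m (by simp [hm])
    have hσ : Supp n (wordProd L) := supp_wordProd hL
    have hne : wordProd L j ≠ wordProd L (j+1) := by
      intro he; exact absurd ((wordProd L).injective he) (by omega)
    rw [wordProd_concat]
    rcases lt_or_gt_of_ne hne with hlt | hgt
    · rw [inver_mul_swap_pos hσ hj.1 hj.2 hlt]
      simpa using ih hL
    · have := inver_mul_swap_neg hσ hj.1 hj.2 hgt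
      have := ih hL
      simp only [List.length_append, List.length_cons, List.length_nil]
      omega

lemma strictMonoOn_id_Icc {n : ℕ} (f : ℕ → ℕ)
    (hmaps : ∀ x, 1 ≤ x → x ≤ n → 1 ≤ f x ∧ f x ≤ n)
    (hmono : ∀ x y, 1 ≤ x → y ≤ n → x < y → f x < f y) :
    ∀ x, 1 ≤ x → x ≤ n → f x = x := by
  have lower : ∀ x, 1 ≤ x → x ≤ n → x ≤ f x := by
    intro x
    induction x with
    | zero => omega
    | succ k ih =>
      intro h1 h2
      rcases Nat.eq_zero_or_pos k with rfl | hk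
      · exact (hmaps 1 le_rfl h2).1
      · have hk2 : k ≤ f k := ih hk (by omega)
        have := hmono k (k+1) hk h2 (by omega)
        omega
  have upper : ∀ d x, 1 ≤ x → x ≤ n → n - x ≤ d → f x ≤ x := by
    intro d
    induction d with
    | zero => intro x h1 h2 h3
              have : x = n := by omega
              subst this
              exact (hmaps x h1 h2).2
    | succ d ih =>
      intro x h1 h2 h3
      rcases eq_or_lt_of_le h2 with rfl | hlt
      · exact (hmaps x h1 le_rfl).2
      · have h4 : f (x+1) ≤ x + 1 := ih (x+1) (by omega) (by omega) (by omega)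
        have := hmono x (x+1) h1 (by omega) (by omega)
        omega
  intro x h1 h2
  have := lower x h1 h2
  have := upper n x h1 h2 (by omega)
  omega

lemma eq_one_of_inver_eq_zero {n : ℕ} {σ : Equiv.Perm ℕ} (hσ : Supp n σ)
    (h : inver n σ = 0) : σ = 1 := by
  have hmono : ∀ x y, 1 ≤ x → y ≤ n → x < y → σ⁻¹ x < σ⁻¹ y := by
    intro x y hx hy hxy
    have hxm : x ∈ Finset.Icc 1 n := by simp; omega
    have hym : y ∈ Finset.Icc 1 n := by simp; omega
    have hnm : (x, y) ∉ InvSet n σ := by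
      rw [inver, Finset.card_eq_zero] at h
      simp [h]
    rw [mem_invSet] at hnm
    push_neg at hnm
    have hne : σ⁻¹ x ≠ σ⁻¹ y := fun he => absurd (σ⁻¹.injective he) (by omega)
    have := hnm ⟨hxm, hym⟩ hxy
    omega
  have hmaps : ∀ x, 1 ≤ x → x ≤ n → 1 ≤ σ⁻¹ x ∧ σ⁻¹ x ≤ n := by
    intro x h1 h2
    have := hσ.inv.mem_of_mem (x := x) (by simp; omega)
    simpa using this
  have hid := strictMonoOn_id_Icc (fun x => σ⁻¹ x) hmaps hmono
  have : σ⁻¹ = 1 := by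
    ext x
    rcases le_or_gt x n with hle | hgt
    · rcases Nat.eq_zero_or_pos x with rfl | hx
      · simpa using hσ.inv 0 (by simp)
      · simpa using hid x hx hle
    · simpa using hσ.inv x (by simp; omega)
  rw [← inv_inv σ, this]; rfl

lemma exists_reduced_word {n : ℕ} : ∀ N (σ : Equiv.Perm ℕ), Supp n σ → inver n σ ≤ N →
    ∃ L : List ℕ, (∀ m ∈ L, m ∈ Finset.Icc 1 (n-1)) ∧ wordProd L = σ ∧
      L.length = inver n σ := by
  intro N
  induction N with
  | zero =>
    intro σ hσ hle
    have h0 : inver n σ = 0 := by omega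
    refine ⟨[], by simp, ?_, by simp [h0]⟩
    rw [wordProd_nil, eq_one_of_inver_eq_zero hσ h0]
  | succ N ih =>
    intro σ hσ hle
    rcases Nat.eq_zero_or_pos (inver n σ) with h0 | hpos
    · refine ⟨[], by simp, ?_, by simp [h0]⟩
      rw [wordProd_nil, eq_one_of_inver_eq_zero hσ h0]
    · have hex : ∃ j, 1 ≤ j ∧ j ≤ n - 1 ∧ σ (j+1) < σ j := by
        by_contra hno
        push_neg at hno
        have hstep : ∀ j, 1 ≤ j → j ≤ n - 1 → σ j < σ (j+1) := by
          intro j h1 h2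
          have hne : σ j ≠ σ (j+1) := fun he => absurd (σ.injective he) (by omega)
          have := hno j h1 h2
          omega
        have hmono : ∀ x y, 1 ≤ x → y ≤ n → x < y → σ x < σ y := by
          intro x y hx
          induction y with
          | zero => omega
          | succ k ihk =>
            intro hy hxy
            rcases eq_or_lt_of_le (Nat.lt_succ_iff.mp hxy) with rfl | hlt
            · exact hstep x hx (by omega)
            · have h1 : σ x < σ k := ihk (by omega) hlt
              have h2 : σ k < σ (k+1) := hstep k (by omega) (by omega)
              omega
        have hmaps : ∀ x, 1 ≤ x → x ≤ n → 1 ≤ σ x ∧ σ x ≤ n := by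
          intro x h1 h2
          have := hσ.mem_of_mem (x := x) (by simp; omega)
          simpa using this
        have hid := strictMonoOn_id_Icc (fun x => σ x) hmaps hmono
        have : σ = 1 := by
          ext x
          rcases le_or_gt x n with hle | hgt
          · rcases Nat.eq_zero_or_pos x with rfl | hx
            · simpa using hσ 0 (by simp)
            · simpa using hid x hx hle
          · simpa using hσ x (by simp; omega)
        rw [this, inver_one] at hpos
        omega
      obtain ⟨j, hj1, hj2, hjlt⟩ := hex
      set σ' := σ * Equiv.swap j (j+1) with hσ'def
      have hσ' : Supp n σ' := Supp.mul hσ (supp_swap hj1 hj2)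
      have hinv : inver n σ' + 1 = inver n σ := inver_mul_swap_neg hσ hj1 hj2 hjlt
      obtain ⟨L, hL1, hL2, hL3⟩ := ih σ' hσ' (by omega)
      refine ⟨L ++ [j], ?_, ?_, ?_⟩
      · intro m hm
        rcases List.mem_append.mp hm with h | h
        · exact hL1 m h
        · simp at h; subst h; simp; omega
      · rw [wordProd_concat, hL2, hσ'def, mul_assoc, Equiv.swap_mul_self, mul_one]
      · simp only [List.length_append, List.length_cons, List.length_nil]
        omega

lemma isRWord_iff {n : ℕ} {π : Equiv.Perm ℕ} {L : List ℕ} :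
    IsRWord n π L ↔ (∀ m ∈ L, m ∈ Finset.Icc 1 (n-1)) ∧ wordProd L = π ∧
      L.length = inver n π := by
  constructor
  · rintro ⟨h1, h2, h3⟩
    refine ⟨h1, h2, le_antisymm ?_ ?_⟩
    · obtain ⟨L', hL1, hL2, hL3⟩ :=
        exists_reduced_word (inver n π) π (h2 ▸ supp_wordProd h1) le_rfl
      have := h3 L' hL1 hL2
      omega
    · have := inver_le_length L h1
      rw [h2] at this
      exact this
  · rintro ⟨h1, h2, h3⟩
    refine ⟨h1, h2, ?_⟩
    intro L' hL1 hL2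
    have := inver_le_length L' hL1
    rw [hL2] at this
    omega

lemma reduced_drop_last {n : ℕ} {L : List ℕ} {j : ℕ}
    (h : ∀ m ∈ L ++ [j], m ∈ Finset.Icc 1 (n-1))
    (hred : inver n (wordProd (L ++ [j])) = L.length + 1) :
    inver n (wordProd L) = L.length ∧
      InvSet n (wordProd L) ⊆ InvSet n (wordProd (L ++ [j])) := by
  have hj : j ∈ Finset.Icc 1 (n-1) := h j (by simp)
  simp only [Finset.mem_Icc] at hj
  have hL : ∀ m ∈ L, m ∈ Finset.Icc 1 (n-1) := fun m hm => h m (by simp [hm])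
  have hσ : Supp n (wordProd L) := supp_wordProd hL
  have hne : wordProd L j ≠ wordProd L (j+1) := by
    intro he; exact absurd ((wordProd L).injective he) (by omega)
  have hlen := inver_le_length L hL
  rcases lt_or_gt_of_ne hne with hlt | hgt
  · obtain ⟨he, hn⟩ := invSet_mul_swap_pos hσ hj.1 hj.2 hlt
    rw [wordProd_concat] at hred ⊢
    have hcard : inver n (wordProd L * Equiv.swap j (j+1)) = inver n (wordProd L) + 1 :=
      inver_mul_swap_pos hσ hj.1 hj.2 hlt
    constructor
    · omega
    · rw [he]; exact Finset.subset_insert _ _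
  · exfalso
    rw [wordProd_concat] at hred
    have := inver_mul_swap_neg hσ hj.1 hj.2 hgt
    omega

lemma block_of_no_m {m : ℕ} (L : List ℕ) (h : m ∉ L) :
    ∀ x, x ≤ m → wordProd L x ≤ m := by
  induction L with
  | nil => intro x hx; simpa [wordProd_nil] using hx
  | cons a L ih =>
    intro x hx
    have ha : a ≠ m := fun he => h (by simp [he])
    have hy : wordProd L x ≤ m := ih (fun hm => h (by simp [hm])) x hx
    rw [wordProd_cons]
    simp only [Equiv.Perm.mul_apply, Equiv.swap_apply_def]
    split_ifs with h1 h2 <;> omega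

lemma block_inv {m : ℕ} {σ : Equiv.Perm ℕ} (h : ∀ x, x ≤ m → σ x ≤ m) :
    ∀ x, x ≤ m → σ⁻¹ x ≤ m := by
  have himg : (Finset.range (m+1)).image σ = Finset.range (m+1) := by
    apply Finset.eq_of_subset_of_card_le
    · intro y hy
      simp only [Finset.mem_image, Finset.mem_range] at hy ⊢
      obtain ⟨x, hx, rfl⟩ := hy
      have := h x (by omega)
      omega
    · rw [Finset.card_image_of_injective _ σ.injective]
  intro x hx
  have : x ∈ (Finset.range (m+1)).image σ := by rw [himg]; simp; omega
  simp only [Finset.mem_image, Finset.mem_range] at this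
  obtain ⟨y, hy, hyx⟩ := this
  have : σ⁻¹ x = y := by rw [← hyx]; simp
  omega

lemma invSet_pair_of_mem {n m : ℕ} : ∀ (L : List ℕ),
    (∀ a ∈ L, a ∈ Finset.Icc 1 (n-1)) → inver n (wordProd L) = L.length → m ∈ L →
    ∃ u v : ℕ, u ≤ m ∧ m < v ∧ (u, v) ∈ InvSet n (wordProd L) := by
  intro L
  induction L using List.reverseRecOn with
  | nil => intro _ _ hm; simp at hm
  | append_singleton L j ih =>
    intro hlet hred hm
    have hred' : inver n (wordProd (L ++ [j])) = L.length + 1 := by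
      simpa using hred
    obtain ⟨hredL, hsub⟩ := reduced_drop_last hlet hred'
    have hLlet : ∀ a ∈ L, a ∈ Finset.Icc 1 (n-1) := fun a ha => hlet a (by simp [ha])
    by_cases hmL : m ∈ L
    · obtain ⟨u, v, hu, hv, hmem⟩ := ih hLlet hredL hmL
      exact ⟨u, v, hu, hv, hsub hmem⟩
    · have hmj : m = j := by
        rcases List.mem_append.mp hm with h | h
        · exact absurd h hmL
        · simpa using h
      subst hmj
      have hj : m ∈ Finset.Icc 1 (n-1) := hlet m (by simp)
      simp only [Finset.mem_Icc] at hj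
      set τ := wordProd L with hτ
      have hblock : ∀ x, x ≤ m → τ x ≤ m := block_of_no_m L hmL
      have hτj : τ m ≤ m := hblock m le_rfl
      have hτj1 : m < τ (m+1) := by
        by_contra hc
        push_neg at hc
        have := block_inv hblock (τ (m+1)) hc
        simp [hτ] at this
      have hσ : Supp n τ := supp_wordProd hLlet
      obtain ⟨he, _⟩ := invSet_mul_swap_pos hσ hj.1 hj.2 (by omega)
      refine ⟨τ m, τ (m+1), hτj, hτj1, ?_⟩
      rw [wordProd_concat, ← hτ, he]
      simp

lemma not_mem_of_block {n m : ℕ} {L : List ℕ}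
    (hlet : ∀ a ∈ L, a ∈ Finset.Icc 1 (n-1))
    (hred : inver n (wordProd L) = L.length)
    (hblock : ∀ x, x ≤ m → wordProd L x ≤ m) : m ∉ L := by
  intro hm
  obtain ⟨u, v, hu, hv, hmem⟩ := invSet_pair_of_mem L hlet hred hm
  rw [mem_invSet] at hmem
  obtain ⟨-, -, hlt⟩ := hmem
  set σ := wordProd L
  have h1 : σ⁻¹ u ≤ m := block_inv hblock u hu
  have h2 : σ⁻¹ v ≤ m := by omega
  have : σ (σ⁻¹ v) ≤ m := hblock _ h2
  simp at this
  omega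

lemma inver_swap_mul_descent {n m : ℕ} {π : Equiv.Perm ℕ} (hπ : Supp n π)
    (h1 : 1 ≤ m) (h2 : m ≤ n-1) (hd : π⁻¹ (m+1) < π⁻¹ m) :
    inver n (Equiv.swap m (m+1) * π) + 1 = inver n π := by
  have hkey : Equiv.swap m (m+1) * π = (π⁻¹ * Equiv.swap m (m+1))⁻¹ := by
    rw [mul_inv_rev, inv_inv, Equiv.swap_inv]
  rw [hkey, inver_inv (Supp.mul hπ.inv (supp_swap h1 h2))]
  have := inver_mul_swap_neg hπ.inv h1 h2 hd
  rw [this, inver_inv hπ]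

lemma inver_swap_mul_ascent {n m : ℕ} {π : Equiv.Perm ℕ} (hπ : Supp n π)
    (h1 : 1 ≤ m) (h2 : m ≤ n-1) (hd : π⁻¹ m < π⁻¹ (m+1)) :
    inver n (Equiv.swap m (m+1) * π) = inver n π + 1 := by
  have hkey : Equiv.swap m (m+1) * π = (π⁻¹ * Equiv.swap m (m+1))⁻¹ := by
    rw [mul_inv_rev, inv_inv, Equiv.swap_inv]
  rw [hkey, inver_inv (Supp.mul hπ.inv (supp_swap h1 h2))]
  have := inver_mul_swap_pos hπ.inv h1 h2 hd
  rw [this, inver_inv hπ]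

/-! ### list utilities -/

lemma sub_head {m : ℕ} {L t : List ℕ} (h : L <+ m :: t) (hm : m ∈ L) (hnt : m ∉ t) :
    ∃ T, L = m :: T ∧ T <+ t := by
  rcases List.sublist_cons_iff.mp h with h' | ⟨r, rfl, hr⟩
  · exact absurd (h'.subset hm) hnt
  · exact ⟨r, rfl, hr⟩

lemma sub_tail {m : ℕ} {L t : List ℕ} (h : L <+ m :: t) (hm : m ∉ L) : L <+ t := by
  rcases List.sublist_cons_iff.mp h with h' | ⟨r, rfl, hr⟩
  · exact h'
  · exact absurd (by simp) hm

lemma sub_last {m : ℕ} {L t : List ℕ} (h : L <+ t ++ [m]) (hm : m ∈ L) (hnt : m ∉ t) :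
    ∃ T, L = T ++ [m] ∧ T <+ t := by
  have h' : L.reverse <+ m :: t.reverse := by
    have := List.reverse_sublist.mpr h
    simpa using this
  obtain ⟨T, hT, hTs⟩ := sub_head h' (by simp [hm]) (by simp [hnt])
  refine ⟨T.reverse, ?_, by simpa using List.reverse_sublist.mpr hTs⟩
  have := congrArg List.reverse hT
  simpa using this

lemma sub_drop_last {m : ℕ} {L t : List ℕ} (h : L <+ t ++ [m]) (hm : m ∉ L) : L <+ t := by
  have h' : L.reverse <+ m :: t.reverse := by
    have := List.reverse_sublist.mpr h
    simpa using this
  have := sub_tail h' (by simp [hm])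
  simpa using List.reverse_sublist.mpr (by simpa using this : L.reverse <+ t.reverse)

lemma sub_cancel_last {m : ℕ} {A B : List ℕ} (h : A ++ [m] <+ B ++ [m]) : A <+ B := by
  have h' : m :: A.reverse <+ m :: B.reverse := by
    have := List.reverse_sublist.mpr h
    simpa using this
  have := List.cons_sublist_cons.mp h'
  simpa using List.reverse_sublist.mpr (by simpa using this : A.reverse <+ B.reverse)

lemma chain_all_sub {L : List ℕ} {rest : List (List ℕ)}
    (h : List.Chain' (fun f g => g.Sublist f) (L :: rest)) :
    ∀ g ∈ rest, g <+ L := by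
  induction rest generalizing L with
  | nil => simp
  | cons M rest ih =>
    intro g hg
    rw [List.Chain', List.isChain_cons_cons] at h
    rcases List.mem_cons.mp hg with rfl | hg'
    · exact h.1
    · exact (ih h.2 g (by exact hg')).trans h.1
  
/-! ### peel -/

def strip (m : ℕ) (L : List ℕ) : List ℕ := if m ∈ L then L.tail else L

def flagOf (m : ℕ) (F : List (List ℕ)) : List ℕ :=
  if m ∈ (F.head?.getD []) then [m] else []

def peel (m : ℕ) : List (List ℕ) → List (List ℕ)
  | [] => []
  | L :: rest => (strip m L ++ flagOf m rest) :: peel m rest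

lemma peel_flatten {m : ℕ} {t : List ℕ} (hnt : m ∉ t) :
    ∀ F : List (List ℕ), (∀ f ∈ F, f <+ m :: t) →
      flagOf m F ++ (peel m F).flatten = F.flatten := by
  intro F
  induction F with
  | nil => intro _; rfl
  | cons L rest ih =>
    intro hf
    have hrest : ∀ f ∈ rest, f <+ m :: t := fun f hf' => hf f (by simp [hf'])
    have hL : L <+ m :: t := hf L (by simp)
    show flagOf m (L :: rest) ++ ((strip m L ++ flagOf m rest) :: peel m rest).flatten
      = L ++ rest.flatten
    rw [List.flatten_cons]
    have ihh := ih hrest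
    by_cases hm : m ∈ L
    · obtain ⟨T, rfl, hT⟩ := sub_head hL hm hnt
      have hflag : flagOf m ((m :: T) :: rest) = [m] := by simp [flagOf]
      have hstrip : strip m (m :: T) = T := by simp [strip, hm]
      rw [hflag, hstrip]
      simp only [List.append_assoc] at ihh ⊢
      rw [ihh]
      simp
    · have hflag : flagOf m (L :: rest) = [] := by simp [flagOf, hm]
      have hstrip : strip m L = L := by simp [strip, hm]
      rw [hflag, hstrip]
      simp only [List.nil_append, List.append_assoc]
      rw [ihh]

lemma peel_factors {m : ℕ} {t : List ℕ} (hnt : m ∉ t) :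
    ∀ F : List (List ℕ), (∀ f ∈ F, f <+ m :: t) →
      ∀ g ∈ peel m F, g <+ t ++ [m] := by
  intro F
  induction F with
  | nil => intro _ g hg; simp [peel] at hg
  | cons L rest ih =>
    intro hf g hg
    have hrest : ∀ f ∈ rest, f <+ m :: t := fun f hf' => hf f (by simp [hf'])
    simp only [peel] at hg
    rcases List.mem_cons.mp hg with rfl | hg'
    · have hL : L <+ m :: t := hf L (by simp)
      have h1 : strip m L <+ t := by
        by_cases hm : m ∈ L
        · obtain ⟨T, rfl, hT⟩ := sub_head hL hm hnt
          simpa [strip, hm] using hT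
        · simpa [strip, hm] using sub_tail hL hm
      have h2 : flagOf m rest <+ [m] := by
        unfold flagOf; split <;> simp
      exact h1.append h2
    · exact ih hrest g hg'

lemma peel_chain {m : ℕ} {t : List ℕ} (hnt : m ∉ t) :
    ∀ F : List (List ℕ), (∀ f ∈ F, f <+ m :: t) →
      List.Chain' (fun f g => g.Sublist f) F →
      List.Chain' (fun f g => g.Sublist f) (peel m F) := by
  intro F
  induction F with
  | nil => intro _ _; simp [peel, List.Chain']
  | cons L rest ih =>
    intro hf hc
    have hrest : ∀ f ∈ rest, f <+ m :: t := fun f hf' => hf f (by simp [hf'])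
    have hc' : List.Chain' (fun f g => g.Sublist f) rest := hc.tail
    show List.Chain' _ ((strip m L ++ flagOf m rest) :: peel m rest)
    rw [List.Chain', List.isChain_cons]
    refine ⟨?_, ih hrest hc'⟩
    intro y hy
    cases rest with
    | nil => simp [peel] at hy
    | cons M rest' =>
      simp only [peel, List.head?_cons, Option.mem_def, Option.some.injEq] at hy
      subst hy
      have hML : M <+ L := (List.isChain_cons_cons.mp hc).1
      have hLt : L <+ m :: t := hf L (by simp)
      have hMt : M <+ m :: t := hf M (by simp)
      by_cases hmM : m ∈ M
      · have hmL : m ∈ L := hML.subset hmM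
        obtain ⟨TL, rfl, hTL⟩ := sub_head hLt hmL hnt
        obtain ⟨TM, rfl, hTM⟩ := sub_head hMt hmM hnt
        have hTsub : TM <+ TL := List.cons_sublist_cons.mp hML
        have hflag1 : flagOf m ((m :: TM) :: rest') = [m] := by simp [flagOf]
        have hstrip : strip m (m :: TL) = TL := by simp [strip]
        have hstrip2 : strip m (m :: TM) = TM := by simp [strip]
        rw [hflag1, hstrip, hstrip2]
        have hflag2 : flagOf m rest' <+ [m] := by unfold flagOf; split <;> simp
        exact hTsub.append hflag2
      · have hflag1 : flagOf m (M :: rest') = [] := by simp [flagOf, hmM]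
        have hflag2 : flagOf m rest' = [] := by
          unfold flagOf
          cases rest' with
          | nil => simp
          | cons R rest'' =>
            have hRM : R <+ M := (List.isChain_cons_cons.mp hc').1
            have : m ∉ R := fun hr => hmM (hRM.subset hr)
            simp [this]
        rw [hflag1, hflag2]
        have hstrip2 : strip m M = M := by simp [strip, hmM]
        rw [hstrip2, List.append_nil]
        have hMsub : M <+ strip m L := by
          by_cases hmL : m ∈ L
          · obtain ⟨TL, rfl, hTL⟩ := sub_head hLt hmL hnt
            have : M <+ m :: TL := hML
            simpa [strip] using sub_tail this hmM
          · simpa [strip, hmL] using hML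
        exact hMsub.trans (List.sublist_append_left _ _)

/-! ### unpeel -/

def dropm (m : ℕ) (M : List ℕ) : List ℕ := if m ∈ M then M.dropLast else M

def goF (m : ℕ) : List ℕ → List (List ℕ) → List (List ℕ)
  | f, [] => if f = [] then [] else [f]
  | f, M :: rest => (f ++ dropm m M) :: goF m (if m ∈ M then [m] else []) rest

lemma dropm_spec {m : ℕ} {t M : List ℕ} (hnt : m ∉ t) (h : M <+ t ++ [m]) :
    dropm m M <+ t ∧ M = dropm m M ++ (if m ∈ M then [m] else []) := by
  by_cases hm : m ∈ M
  · obtain ⟨T, rfl, hT⟩ := sub_last h hm hnt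
    simp [dropm, hm, hT]
  · exact ⟨by simpa [dropm, hm] using sub_drop_last h hm, by simp [dropm, hm]⟩

lemma goF_flatten {m : ℕ} {t : List ℕ} (hnt : m ∉ t) :
    ∀ (rest : List (List ℕ)) (f : List ℕ), (∀ M ∈ rest, M <+ t ++ [m]) →
      (goF m f rest).flatten = f ++ rest.flatten := by
  intro rest
  induction rest with
  | nil => intro f _; by_cases hf : f = [] <;> simp [goF, hf]
  | cons M rest ih =>
    intro f hall
    have hM := hall M (by simp)
    have hrest : ∀ N ∈ rest, N <+ t ++ [m] := fun N hN => hall N (by simp [hN])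
    have hds := (dropm_spec hnt hM).2
    show ((f ++ dropm m M) :: goF m (if m ∈ M then [m] else []) rest).flatten
      = f ++ (M :: rest).flatten
    rw [List.flatten_cons, ih _ hrest, List.flatten_cons]
    conv_rhs => rw [hds]
    simp [List.append_assoc]

lemma goF_factors {m : ℕ} {t : List ℕ} (hnt : m ∉ t) :
    ∀ (rest : List (List ℕ)) (f : List ℕ), f <+ [m] → (∀ M ∈ rest, M <+ t ++ [m]) →
      ∀ g ∈ goF m f rest, g <+ m :: t := by
  intro rest
  induction rest with
  | nil =>
    intro f hfm _ g hg
    simp only [goF] at hg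
    split at hg
    · simp at hg
    · simp at hg
      subst hg
      exact hfm.trans (by simpa using (List.nil_sublist t).cons₂ m)
  | cons M rest ih =>
    intro f hfm hall g hg
    have hM := hall M (by simp)
    have hrest : ∀ N ∈ rest, N <+ t ++ [m] := fun N hN => hall N (by simp [hN])
    simp only [goF] at hg
    rcases List.mem_cons.mp hg with rfl | hg'
    · have h1 : dropm m M <+ t := (dropm_spec hnt hM).1
      have : f ++ dropm m M <+ [m] ++ t := hfm.append h1
      simpa using this
    · exact ih _ (by split <;> simp) hrest g hg'

lemma goF_chain {m : ℕ} {t : List ℕ} (hnt : m ∉ t) :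
    ∀ (rest : List (List ℕ)) (f : List ℕ),
      (∀ M ∈ rest, M <+ t ++ [m]) →
      List.Chain' (fun f g => g.Sublist f) rest →
      ((m ∈ rest.head?.getD []) → f = [m]) →
      List.Chain' (fun f g => g.Sublist f) (goF m f rest) := by
  intro rest
  induction rest with
  | nil => intro f _ _ _; simp only [goF]; split <;> simp [List.Chain']
  | cons M rest ih =>
    intro f hall hc hinv
    have hM := hall M (by simp)
    have hrest : ∀ N ∈ rest, N <+ t ++ [m] := fun N hN => hall N (by simp [hN])
    show List.Chain' _ ((f ++ dropm m M) :: goF m (if m ∈ M then [m] else []) rest)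
    rw [List.Chain', List.isChain_cons]
    constructor
    · intro y hy
      cases rest with
      | nil =>
        by_cases hmM : m ∈ M
        · have hf : f = [m] := hinv (by simpa using hmM)
          simp only [goF, hmM, if_pos] at hy
          rw [if_neg (by simp : ¬([m] : List ℕ) = [])] at hy
          simp only [List.head?_cons, Option.mem_def, Option.some.injEq] at hy
          subst hy
          rw [hf]
          exact List.sublist_append_left _ _
        · simp only [goF, hmM, if_neg] at hy
          simp at hy
      | cons M' rest' =>
        simp only [goF, List.head?_cons, Option.mem_def, Option.some.injEq] at hy
        subst hy

        have hM'M : M' <+ M := (List.isChain_cons_cons.mp hc).1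
        have hM' := hall M' (by simp)
        by_cases hmM : m ∈ M
        · have hf : f = [m] := hinv (by simpa using hmM)
          simp only [hmM, if_pos]
          rw [hf]
          have hdd : dropm m M' <+ dropm m M := by
            obtain ⟨T, rfl, hT⟩ := sub_last hM hmM hnt
            by_cases hmM' : m ∈ M'
            · obtain ⟨T', rfl, hT'⟩ := sub_last hM' hmM' hnt
              simp only [dropm, hmM, hmM', if_pos, List.dropLast_concat]
              exact sub_cancel_last hM'M
            · simp only [dropm, hmM, hmM', if_pos, if_neg, List.dropLast_concat]
              exact sub_drop_last hM'M hmM'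
          exact ((List.Sublist.refl [m]).append hdd).trans (by simp)
        · have hmM' : m ∉ M' := fun h => hmM (hM'M.subset h)
          rw [if_neg hmM, List.nil_append]
          have hdd : dropm m M' <+ dropm m M := by
            unfold dropm
            rw [if_neg hmM, if_neg hmM']
            exact hM'M
          exact hdd.trans (List.sublist_append_right _ _)
    · apply ih _ hrest hc.tail
      intro hmem
      cases rest with
      | nil => simp at hmem
      | cons M' rest' =>
        have hM'M : M' <+ M := (List.isChain_cons_cons.mp hc).1
        have : m ∈ M := hM'M.subset (by simpa using hmem)
        simp [this]

lemma head_mem_all {F : List (List ℕ)} (hch : List.Chain' (fun f g => g.Sublist f) F)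
    {m : ℕ} (hm : m ∉ F.head?.getD []) : ∀ f ∈ F, m ∉ f := by
  cases F with
  | nil => simp
  | cons L rest =>
    intro f hf
    rcases List.mem_cons.mp hf with rfl | hf'
    · simpa using hm
    · intro hmf
      exact hm (by simpa using (chain_all_sub hch f hf').subset hmf)

lemma csortable_rotate_descent {n m : ℕ} {t : List ℕ} {π : Equiv.Perm ℕ}
    (hπ : Supp n π)
    (hc : ∀ a ∈ m :: t, a ∈ Finset.Icc 1 (n-1)) (hnt : m ∉ t)
    (hd : π⁻¹ (m+1) < π⁻¹ m) :
    CSortable n (m :: t) π ↔ CSortable n (t ++ [m]) (Equiv.swap m (m+1) * π) := by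
  have hm12 : 1 ≤ m ∧ m ≤ n - 1 := by simpa using hc m (by simp)
  constructor
  · rintro ⟨F, hfac, hch, hrw⟩
    rw [isRWord_iff] at hrw
    obtain ⟨hlet, hprod, hlen⟩ := hrw
    have hmhead : m ∈ F.head?.getD [] := by
      by_contra hmh
      have hall : ∀ f ∈ F, m ∉ f := head_mem_all hch hmh
      have hW : m ∉ F.flatten := by
        rw [List.mem_flatten]
        rintro ⟨l, hl, hml⟩
        exact hall l hl hml
      have hblock := block_of_no_m F.flatten hW
      rw [hprod] at hblock
      have h1 : π⁻¹ m ≤ m := block_inv hblock m le_rfl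
      have h2 : ¬ (π⁻¹ (m+1) ≤ m) := by
        intro hcl
        have := hblock _ hcl
        simp at this
      omega
    have hflag : flagOf m F = [m] := by simp [flagOf, hmhead]
    have hflat : F.flatten = m :: (peel m F).flatten := by
      have := peel_flatten hnt F hfac
      rw [hflag] at this
      simpa using this.symm
    refine ⟨peel m F, peel_factors hnt F hfac, peel_chain hnt F hfac hch, ?_⟩
    rw [isRWord_iff]
    have hprod' : Equiv.swap m (m+1) * wordProd (peel m F).flatten = π := by
      rw [← wordProd_cons, ← hflat, hprod]
    refine ⟨?_, ?_, ?_⟩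
    · intro a ha
      exact hlet a (by rw [hflat]; simp [ha])
    · rw [← hprod', ← mul_assoc, Equiv.swap_mul_self, one_mul]
    · have hlen2 : F.flatten.length = (peel m F).flatten.length + 1 := by
        rw [hflat]; simp
      have hdes := inver_swap_mul_descent hπ hm12.1 hm12.2 hd
      omega
  · rintro ⟨F', hfac, hch, hrw⟩
    rw [isRWord_iff] at hrw
    obtain ⟨hlet, hprod, hlen⟩ := hrw
    have hflat : (goF m [m] F').flatten = m :: F'.flatten := goF_flatten hnt F' [m] hfac
    refine ⟨goF m [m] F', goF_factors hnt F' [m] (List.Sublist.refl _) hfac,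
      goF_chain hnt F' [m] hfac hch (fun _ => rfl), ?_⟩
    rw [isRWord_iff]
    refine ⟨?_, ?_, ?_⟩
    · intro a ha
      rw [hflat] at ha
      rcases List.mem_cons.mp ha with rfl | ha'
      · simp; omega
      · exact hlet a ha'
    · rw [hflat, wordProd_cons, hprod, ← mul_assoc, Equiv.swap_mul_self, one_mul]
    · have hdes := inver_swap_mul_descent hπ hm12.1 hm12.2 hd
      rw [hflat]
      simp only [List.length_cons]
      omega

lemma csortable_rotate_ascent {n m : ℕ} {t : List ℕ} {π : Equiv.Perm ℕ}
    (hπ : Supp n π)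
    (hc : ∀ a ∈ m :: t, a ∈ Finset.Icc 1 (n-1)) (hnt : m ∉ t)
    (hd : π⁻¹ m < π⁻¹ (m+1)) :
    CSortable n (m :: t) π ↔ (∀ x, x ≤ m → π x ≤ m) ∧ CSortable n (t ++ [m]) π := by
  have hm12 : 1 ≤ m ∧ m ≤ n - 1 := by simpa using hc m (by simp)
  constructor
  · rintro ⟨F, hfac, hch, hrw⟩
    rw [isRWord_iff] at hrw
    obtain ⟨hlet, hprod, hlen⟩ := hrw
    have hmhead : m ∉ F.head?.getD [] := by
      intro hmh
      cases F with
      | nil => simp at hmh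
      | cons L rest =>
        simp only [List.head?_cons, Option.getD_some] at hmh
        obtain ⟨T, rfl, hT⟩ := sub_head (hfac L (by simp)) hmh hnt
        have hflat : ((m :: T) :: rest).flatten = m :: (T ++ rest.flatten) := by simp
        have hX : Equiv.swap m (m+1) * wordProd (T ++ rest.flatten) = π := by
          rw [← wordProd_cons, ← hflat, hprod]
        have hXw : wordProd (T ++ rest.flatten) = Equiv.swap m (m+1) * π := by
          rw [← hX, ← mul_assoc, Equiv.swap_mul_self, one_mul]
        have hXlet : ∀ a ∈ T ++ rest.flatten, a ∈ Finset.Icc 1 (n-1) := by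
          intro a ha
          exact hlet a (by rw [hflat]; simp [ha])
        have hle := inver_le_length (T ++ rest.flatten) hXlet
        rw [hXw] at hle
        have hasc := inver_swap_mul_ascent hπ hm12.1 hm12.2 hd
        have hlen2 : ((m :: T) :: rest).flatten.length = (T ++ rest.flatten).length + 1 := by
          rw [hflat]; simp
        omega
    have hall : ∀ f ∈ F, m ∉ f := head_mem_all hch hmhead
    have hW : m ∉ F.flatten := by
      rw [List.mem_flatten]
      rintro ⟨l, hl, hml⟩
      exact hall l hl hml
    have hblock := block_of_no_m F.flatten hW
    rw [hprod] at hblock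
    refine ⟨hblock, F, ?_, hch, isRWord_iff.mpr ⟨hlet, hprod, hlen⟩⟩
    intro f hf
    exact (sub_tail (hfac f hf) (hall f hf)).trans (List.sublist_append_left _ _)
  · rintro ⟨hB, F', hfac, hch, hrw⟩
    rw [isRWord_iff] at hrw
    obtain ⟨hlet, hprod, hlen⟩ := hrw
    have hred : inver n (wordProd F'.flatten) = F'.flatten.length := by
      rw [hprod]; omega
    have hW : m ∉ F'.flatten := by
      apply not_mem_of_block hlet hred
      rw [hprod]; exact hB
    have hall : ∀ f ∈ F', m ∉ f := by
      intro f hf hmf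
      exact hW (List.mem_flatten.mpr ⟨f, hf, hmf⟩)
    refine ⟨F', ?_, hch, isRWord_iff.mpr ⟨hlet, hprod, hlen⟩⟩
    intro f hf
    exact (sub_drop_last (hfac f hf) (hall f hf)).trans (List.sublist_cons_self _ _)

/-! ### swap value helpers -/

section Swaps
variable {m y j : ℕ}

lemma sw_eq_top : Equiv.swap m (m+1) y = m+1 ↔ y = m := by
  rw [Equiv.swap_apply_def]; split_ifs <;> omega

lemma sw_eq_bot : Equiv.swap m (m+1) y = m ↔ y = m+1 := by
  rw [Equiv.swap_apply_def]; split_ifs <;> omega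

lemma sw_gt_top : m+1 < Equiv.swap m (m+1) y ↔ m+1 < y := by
  rw [Equiv.swap_apply_def]; split_ifs <;> omega

lemma sw_lt_bot : Equiv.swap m (m+1) y < m ↔ y < m := by
  rw [Equiv.swap_apply_def]; split_ifs <;> omega

lemma sw_lt_top : Equiv.swap m (m+1) y < m+1 ↔ (y < m ∨ y = m+1) := by
  rw [Equiv.swap_apply_def]; split_ifs <;> omega

lemma sw_gt_bot : m < Equiv.swap m (m+1) y ↔ (m+1 < y ∨ y = m) := by
  rw [Equiv.swap_apply_def]; split_ifs <;> omega

lemma sw_eq_other (h1 : j ≠ m) (h2 : j ≠ m+1) : Equiv.swap m (m+1) y = j ↔ y = j := by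
  rw [Equiv.swap_apply_def]; split_ifs <;> omega

lemma sw_gt_other (h1 : j ≠ m) (h2 : j ≠ m+1) : j < Equiv.swap m (m+1) y ↔ j < y := by
  rw [Equiv.swap_apply_def]; split_ifs <;> omega

lemma sw_lt_other (h1 : j ≠ m) (h2 : j ≠ m+1) : Equiv.swap m (m+1) y < j ↔ y < j := by
  rw [Equiv.swap_apply_def]; split_ifs <;> omega

end Swaps

/-! ### pattern existence translations (descent case) -/

section Patterns
variable {n m : ℕ} {π : Equiv.Perm ℕ}

lemma inv_mem_Icc (hπ : Supp n π) {v : ℕ} (h1 : 1 ≤ v) (h2 : v ≤ n) :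
    1 ≤ π⁻¹ v ∧ π⁻¹ v ≤ n := by
  have := hπ.inv.mem_of_mem (x := v) (by simp; omega)
  simpa using this

lemma app_mem_Icc (hπ : Supp n π) {v : ℕ} (h1 : 1 ≤ v) (h2 : v ≤ n) :
    1 ≤ π v ∧ π v ≤ n := by
  have := hπ.mem_of_mem (x := v) (by simp; omega)
  simpa using this

lemma T1 (hπ : Supp n π) (hm1 : 1 ≤ m) (hm2 : m ≤ n - 1)
    (hba : π⁻¹ (m+1) < π⁻¹ m) :
    (∃ p q r : ℕ, 1 ≤ p ∧ p < q ∧ q < r ∧ r ≤ n ∧ π p = m ∧ m < π q ∧ π r < m)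
      ↔ (∃ q r : ℕ, π⁻¹ m < q ∧ q < r ∧ r ≤ n ∧ m+1 < π q ∧ π r < m) := by
  constructor
  · rintro ⟨p, q, r, h1, h2, h3, h4, h5, h6, h7⟩
    have hp : p = π⁻¹ m := by rw [← h5]; simp
    subst hp
    refine ⟨q, r, h2, h3, h4, ?_, h7⟩
    have hq : π q ≠ m + 1 := by
      intro he
      have : q = π⁻¹ (m+1) := by rw [← he]; simp
      omega
    omega
  · rintro ⟨q, r, h2, h3, h4, h6, h7⟩
    have ha := inv_mem_Icc hπ hm1 (by omega) (v := m)
    exact ⟨π⁻¹ m, q, r, ha.1, h2, h3, h4, by simp, by omega, h7⟩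

lemma T2 (hπ : Supp n π) (hm1 : 1 ≤ m) (hm2 : m ≤ n - 1)
    (hba : π⁻¹ (m+1) < π⁻¹ m) :
    (∃ p q r : ℕ, 1 ≤ p ∧ p < q ∧ q < r ∧ r ≤ n ∧
        (Equiv.swap m (m+1) * π) p = m+1 ∧ m+1 < (Equiv.swap m (m+1) * π) q ∧
        (Equiv.swap m (m+1) * π) r < m+1)
      ↔ (∃ q r : ℕ, π⁻¹ m < q ∧ q < r ∧ r ≤ n ∧ m+1 < π q ∧ π r < m) := by
  constructor
  · rintro ⟨p, q, r, h1, h2, h3, h4, h5, h6, h7⟩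
    simp only [Equiv.Perm.mul_apply] at h5 h6 h7
    rw [sw_eq_top] at h5
    rw [sw_gt_top] at h6
    rw [sw_lt_top] at h7
    have hp : p = π⁻¹ m := by rw [← h5]; simp
    subst hp
    refine ⟨q, r, h2, h3, h4, h6, ?_⟩
    rcases h7 with h7 | h7
    · exact h7
    · exfalso
      have : r = π⁻¹ (m+1) := by rw [← h7]; simp
      omega
  · rintro ⟨q, r, h2, h3, h4, h6, h7⟩
    have ha := inv_mem_Icc hπ hm1 (by omega) (v := m)
    refine ⟨π⁻¹ m, q, r, ha.1, h2, h3, h4, ?_, ?_, ?_⟩ <;>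
      simp only [Equiv.Perm.mul_apply]
    · rw [sw_eq_top]; simp
    · rw [sw_gt_top]; exact h6
    · rw [sw_lt_top]; exact Or.inl h7

lemma T3 (hπ : Supp n π) (hm1 : 1 ≤ m) (hm2 : m ≤ n - 1)
    (hba : π⁻¹ (m+1) < π⁻¹ m) :
    (∃ p q r : ℕ, 1 ≤ p ∧ p < q ∧ q < r ∧ r ≤ n ∧
        m+1 < π p ∧ π q < m+1 ∧ π r = m+1)
      ↔ (∃ p q : ℕ, 1 ≤ p ∧ p < q ∧ q < π⁻¹ (m+1) ∧ m+1 < π p ∧ π q < m) := by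
  have hn2 : 2 ≤ n := by omega
  constructor
  · rintro ⟨p, q, r, h1, h2, h3, h4, h5, h6, h7⟩
    have hr : r = π⁻¹ (m+1) := by rw [← h7]; simp
    subst hr
    refine ⟨p, q, h1, h2, h3, h5, ?_⟩
    have hq : π q ≠ m := by
      intro he
      have : q = π⁻¹ m := by rw [← he]; simp
      omega
    omega
  · rintro ⟨p, q, h1, h2, h3, h5, h6⟩
    have hb := inv_mem_Icc hπ (by omega) (by omega) (v := m+1)
    exact ⟨p, q, π⁻¹ (m+1), h1, h2, h3, hb.2, h5, by omega, by simp⟩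

lemma T4 (hπ : Supp n π) (hm1 : 1 ≤ m) (hm2 : m ≤ n - 1)
    (hba : π⁻¹ (m+1) < π⁻¹ m) :
    (∃ p q r : ℕ, 1 ≤ p ∧ p < q ∧ q < r ∧ r ≤ n ∧
        m < (Equiv.swap m (m+1) * π) p ∧ (Equiv.swap m (m+1) * π) q < m ∧
        (Equiv.swap m (m+1) * π) r = m)
      ↔ (∃ p q : ℕ, 1 ≤ p ∧ p < q ∧ q < π⁻¹ (m+1) ∧ m+1 < π p ∧ π q < m) := by
  have hn2 : 2 ≤ n := by omega
  constructor
  · rintro ⟨p, q, r, h1, h2, h3, h4, h5, h6, h7⟩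
    simp only [Equiv.Perm.mul_apply] at h5 h6 h7
    rw [sw_gt_bot] at h5
    rw [sw_lt_bot] at h6
    rw [sw_eq_bot] at h7
    have hr : r = π⁻¹ (m+1) := by rw [← h7]; simp
    subst hr
    refine ⟨p, q, h1, h2, h3, ?_, h6⟩
    rcases h5 with h5 | h5
    · exact h5
    · exfalso
      have : p = π⁻¹ m := by rw [← h5]; simp
      omega
  · rintro ⟨p, q, h1, h2, h3, h5, h6⟩
    have hb := inv_mem_Icc hπ (by omega) (by omega) (v := m+1)
    refine ⟨p, q, π⁻¹ (m+1), h1, h2, h3, hb.2, ?_, ?_, ?_⟩ <;>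
      simp only [Equiv.Perm.mul_apply]
    · rw [sw_gt_bot]; exact Or.inl h5
    · rw [sw_lt_bot]; exact h6
    · rw [sw_eq_bot]; simp

lemma T5U {j : ℕ} (hj : j ≠ m) (hj1 : j ≠ m+1) :
    (∃ p q r : ℕ, 1 ≤ p ∧ p < q ∧ q < r ∧ r ≤ n ∧ π p = j ∧ j < π q ∧ π r < j)
      ↔ (∃ p q r : ℕ, 1 ≤ p ∧ p < q ∧ q < r ∧ r ≤ n ∧
          (Equiv.swap m (m+1) * π) p = j ∧ j < (Equiv.swap m (m+1) * π) q ∧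
          (Equiv.swap m (m+1) * π) r < j) := by
  apply exists_congr; intro p
  apply exists_congr; intro q
  apply exists_congr; intro r
  simp only [Equiv.Perm.mul_apply]
  rw [sw_eq_other hj hj1, sw_gt_other hj hj1, sw_lt_other hj hj1]

lemma T5D {j : ℕ} (hj : j ≠ m) (hj1 : j ≠ m+1) :
    (∃ p q r : ℕ, 1 ≤ p ∧ p < q ∧ q < r ∧ r ≤ n ∧ j < π p ∧ π q < j ∧ π r = j)
      ↔ (∃ p q r : ℕ, 1 ≤ p ∧ p < q ∧ q < r ∧ r ≤ n ∧
          j < (Equiv.swap m (m+1) * π) p ∧ (Equiv.swap m (m+1) * π) q < j ∧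
          (Equiv.swap m (m+1) * π) r = j) := by
  apply exists_congr; intro p
  apply exists_congr; intro q
  apply exists_congr; intro r
  simp only [Equiv.Perm.mul_apply]
  rw [sw_eq_other hj hj1, sw_gt_other hj hj1, sw_lt_other hj hj1]

end Patterns

/-! ### Avoids -/

def Avoids (n : ℕ) (c : List ℕ) (π : Equiv.Perm ℕ) : Prop :=
  (∀ j : ℕ, 2 ≤ j → j ≤ n - 1 → c.idxOf j < c.idxOf (j - 1) →
      ¬∃ p q r : ℕ, 1 ≤ p ∧ p < q ∧ q < r ∧ r ≤ n ∧ π p = j ∧ j < π q ∧ π r < j) ∧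
  (∀ j : ℕ, 2 ≤ j → j ≤ n - 1 → c.idxOf (j - 1) < c.idxOf j →
      ¬∃ p q r : ℕ, 1 ≤ p ∧ p < q ∧ q < r ∧ r ≤ n ∧ j < π p ∧ π q < j ∧ π r = j)

section IndexOf
variable {m : ℕ} {t : List ℕ}

lemma idx_tr (hnt : m ∉ t) {x y : ℕ} (hx : x ∈ t) (hy : y ∈ t) :
    List.idxOf x (m :: t) < List.idxOf y (m :: t) ↔
      List.idxOf x (t ++ [m]) < List.idxOf y (t ++ [m]) := by
  have hxm : m ≠ x := fun h => hnt (h ▸ hx)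
  have hym : m ≠ y := fun h => hnt (h ▸ hy)
  rw [List.idxOf_cons_ne t hxm, List.idxOf_cons_ne t hym,
    List.idxOf_append_of_mem hx, List.idxOf_append_of_mem hy]
  omega

lemma idx_m_first {x : ℕ} (hx : x ∈ t) (hnt : m ∉ t) :
    List.idxOf m (m :: t) < List.idxOf x (m :: t) := by
  have hxm : m ≠ x := fun h => hnt (h ▸ hx)
  rw [List.idxOf_cons_self, List.idxOf_cons_ne t hxm]
  omega

lemma idx_not_before_m {x : ℕ} : ¬ List.idxOf x (m :: t) < List.idxOf m (m :: t) := by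
  rw [List.idxOf_cons_self]
  omega

lemma idx_m_last {x : ℕ} (hx : x ∈ t) (hnt : m ∉ t) :
    List.idxOf x (t ++ [m]) < List.idxOf m (t ++ [m]) := by
  rw [List.idxOf_append_of_mem hx, List.idxOf_append_of_notMem hnt]
  have := List.idxOf_lt_length_iff.mpr hx
  simp
  omega

lemma idx_not_after_m {x : ℕ} (hx : x ∈ t) (hnt : m ∉ t) :
    ¬ List.idxOf m (t ++ [m]) < List.idxOf x (t ++ [m]) := by
  have := idx_m_last hx hnt
  omega

end IndexOf

section BigPatterns
variable {n m : ℕ} {t : List ℕ} {π : Equiv.Perm ℕ}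

lemma mem_t (hnt : m ∉ t) (hmem : ∀ a : ℕ, a ∈ m :: t ↔ a ∈ Finset.Icc 1 (n-1))
    {x : ℕ} (hx1 : 1 ≤ x) (hx2 : x ≤ n - 1) (hxm : x ≠ m) : x ∈ t := by
  have := (hmem x).mpr (by simp; omega)
  rcases List.mem_cons.mp this with rfl | h
  · omega
  · exact h

lemma avoids_rotate_descent (hπ : Supp n π) (hnt : m ∉ t)
    (hmem : ∀ a : ℕ, a ∈ m :: t ↔ a ∈ Finset.Icc 1 (n-1))
    (hd : π⁻¹ (m+1) < π⁻¹ m) :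
    Avoids n (m :: t) π ↔ Avoids n (t ++ [m]) (Equiv.swap m (m+1) * π) := by
  have hm : 1 ≤ m ∧ m ≤ n - 1 := by simpa using (hmem m).mp (by simp)
  have hn2 : 2 ≤ n := by omega
  have ha1 : 1 ≤ π⁻¹ m := (inv_mem_Icc hπ hm.1 (by omega)).1
  -- trivial pattern facts for the boundary cases
  have trivE1top : m = n - 1 → ¬∃ q r : ℕ, π⁻¹ m < q ∧ q < r ∧ r ≤ n ∧ m+1 < π q ∧ π r < m := by
    rintro rfl ⟨q, r, h2, h3, h4, h6, h7⟩
    have := (app_mem_Icc hπ (v := q) (by omega) (by omega)).2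
    omega
  have trivE1bot : m = 1 → ¬∃ q r : ℕ, π⁻¹ m < q ∧ q < r ∧ r ≤ n ∧ m+1 < π q ∧ π r < m := by
    rintro rfl ⟨q, r, h2, h3, h4, h6, h7⟩
    have := (app_mem_Icc hπ (v := r) (by omega) (by omega)).1
    omega
  have hb2 : π⁻¹ (m+1) ≤ n := (inv_mem_Icc hπ (v := m+1) (by omega) (by omega)).2
  have trivE2top : m = n - 1 → ¬∃ p q : ℕ, 1 ≤ p ∧ p < q ∧ q < π⁻¹ (m+1) ∧ m+1 < π p ∧ π q < m := by
    rintro rfl ⟨p, q, h1, h2, h3, h5, h6⟩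
    have := (app_mem_Icc hπ (v := p) (by omega) (by omega)).2
    omega
  have trivE2bot : m = 1 → ¬∃ p q : ℕ, 1 ≤ p ∧ p < q ∧ q < π⁻¹ (m+1) ∧ m+1 < π p ∧ π q < m := by
    rintro rfl ⟨p, q, h1, h2, h3, h5, h6⟩
    have := (app_mem_Icc hπ (v := q) (by omega) (by omega)).1
    omega
  constructor
  · rintro ⟨hU, hD⟩
    constructor
    · intro j h2 hjn hidx
      by_cases hjm : j = m
      · exfalso
        subst hjm
        have hmem1 : j - 1 ∈ t := mem_t hnt hmem (by omega) (by omega) (by omega)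
        exact idx_not_after_m hmem1 hnt hidx
      · by_cases hjm1 : j = m + 1
        · subst hjm1
          rw [show m + 1 - 1 = m from rfl] at hidx
          rw [T2 hπ hm.1 hm.2 hd]
          rcases eq_or_lt_of_le hm.2 with htop | hlt
          · exact trivE1top htop
          · rcases eq_or_lt_of_le hm.1 with hbot | hgt
            · exact trivE1bot hbot.symm
            · rw [← T1 hπ hm.1 hm.2 hd]
              apply hU m (by omega) hm.2
              exact idx_m_first (mem_t hnt hmem (by omega) (by omega) (by omega)) hnt
        · have hjt : j ∈ t := mem_t hnt hmem (by omega) hjn hjm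
          have hj1t : j - 1 ∈ t := mem_t hnt hmem (by omega) (by omega) (by omega)
          rw [← T5U hjm hjm1]
          exact hU j h2 hjn ((idx_tr hnt hjt hj1t).mpr hidx)
    · intro j h2 hjn hidx
      by_cases hjm : j = m
      · subst hjm
        rw [T4 hπ hm.1 hm.2 hd]
        rcases eq_or_lt_of_le hm.2 with htop | hlt
        · exact trivE2top htop
        · rw [← T3 hπ hm.1 hm.2 hd]
          have := hD (j+1) (by omega) (by omega) ?_
          · simpa using this
          · rw [show j + 1 - 1 = j from rfl]
            exact idx_m_first (mem_t hnt hmem (by omega) (by omega) (by omega)) hnt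
      · by_cases hjm1 : j = m + 1
        · exfalso
          subst hjm1
          rw [show m + 1 - 1 = m from rfl] at hidx
          exact idx_not_after_m (mem_t hnt hmem (by omega) hjn (by omega)) hnt hidx
        · have hjt : j ∈ t := mem_t hnt hmem (by omega) hjn hjm
          have hj1t : j - 1 ∈ t := mem_t hnt hmem (by omega) (by omega) (by omega)
          rw [← T5D hjm hjm1]
          exact hD j h2 hjn ((idx_tr hnt hj1t hjt).mpr hidx)
  · rintro ⟨hU, hD⟩
    constructor
    · intro j h2 hjn hidx
      by_cases hjm : j = m
      · subst hjm
        rw [T1 hπ hm.1 hm.2 hd]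
        rcases eq_or_lt_of_le hm.2 with htop | hlt
        · exact trivE1top htop
        · rw [← T2 hπ hm.1 hm.2 hd]
          have := hU (j+1) (by omega) (by omega) ?_
          · simpa using this
          · rw [show j + 1 - 1 = j from rfl]
            exact idx_m_last (mem_t hnt hmem (by omega) (by omega) (by omega)) hnt
      · by_cases hjm1 : j = m + 1
        · exfalso
          subst hjm1
          rw [show m + 1 - 1 = m from rfl] at hidx
          exact idx_not_before_m hidx
        · have hjt : j ∈ t := mem_t hnt hmem (by omega) hjn hjm
          have hj1t : j - 1 ∈ t := mem_t hnt hmem (by omega) (by omega) (by omega)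
          rw [T5U hjm hjm1]
          exact hU j h2 hjn ((idx_tr hnt hjt hj1t).mp hidx)
    · intro j h2 hjn hidx
      by_cases hjm : j = m
      · exfalso
        subst hjm
        exact idx_not_before_m hidx
      · by_cases hjm1 : j = m + 1
        · subst hjm1
          rw [T3 hπ hm.1 hm.2 hd]
          rcases eq_or_lt_of_le hm.1 with hbot | hgt
          · exact trivE2bot hbot.symm
          · rw [← T4 hπ hm.1 hm.2 hd]
            apply hD m (by omega) hm.2
            exact idx_m_last (mem_t hnt hmem (by omega) (by omega) (by omega)) hnt
        · have hjt : j ∈ t := mem_t hnt hmem (by omega) hjn hjm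
          have hj1t : j - 1 ∈ t := mem_t hnt hmem (by omega) (by omega) (by omega)
          rw [T5D hjm hjm1]
          exact hD j h2 hjn ((idx_tr hnt hj1t hjt).mp hidx)

end BigPatterns

section Ascent
variable {n m : ℕ} {t : List ℕ} {π : Equiv.Perm ℕ}

lemma exists_high_pos (hπ : Supp n π) (hm2 : m ≤ n) {u : ℕ} (hu1 : 1 ≤ u) (hu : u ≤ m)
    (hval : m < π u) : ∃ v, m < v ∧ v ≤ n ∧ 1 ≤ π v ∧ π v ≤ m := by
  by_contra hno
  push_neg at hno
  have himg : (Finset.Icc (m+1) n).image π = Finset.Icc (m+1) n := by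
    apply Finset.eq_of_subset_of_card_le
    · intro y hy
      simp only [Finset.mem_image, Finset.mem_Icc] at hy ⊢
      obtain ⟨v, hv, rfl⟩ := hy
      have happ := app_mem_Icc hπ (v := v) (by omega) (by omega)
      have := hno v (by omega) (by omega) happ.1
      omega
    · rw [Finset.card_image_of_injective _ π.injective]
  have hπu : π u ∈ Finset.Icc (m+1) n := by
    have happ := app_mem_Icc hπ (v := u) hu1 (by omega)
    simp
    omega
  rw [← himg] at hπu
  simp only [Finset.mem_image, Finset.mem_Icc] at hπu
  obtain ⟨w, hw, hwu⟩ := hπu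
  have : w = u := π.injective hwu
  omega

lemma block_of_avoids (hπ : Supp n π) (hnt : m ∉ t)
    (hmem : ∀ a : ℕ, a ∈ m :: t ↔ a ∈ Finset.Icc 1 (n-1))
    (hd : π⁻¹ m < π⁻¹ (m+1)) (hA : Avoids n (m :: t) π) :
    ∀ x, x ≤ m → π x ≤ m := by
  have hm : 1 ≤ m ∧ m ≤ n - 1 := by simpa using (hmem m).mp (by simp)
  have hn2 : 2 ≤ n := by omega
  have ha := inv_mem_Icc hπ (v := m) hm.1 (by omega)
  have hb := inv_mem_Icc hπ (v := m+1) (by omega) (by omega)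
  have hπa : π (π⁻¹ m) = m := by simp
  have hπb : π (π⁻¹ (m+1)) = m + 1 := by simp
  intro x hx
  by_contra hval
  push_neg at hval
  have hx1 : 1 ≤ x := by
    rcases Nat.eq_zero_or_pos x with rfl | h
    · have : π 0 = 0 := hπ 0 (by simp)
      omega
    · exact h
  obtain ⟨v, hv1, hv2, hv3, hv4⟩ := exists_high_pos hπ (by omega) hx1 hx hval
  have hva : v ≠ π⁻¹ m → π v < m := by
    intro hne
    have : π v ≠ m := by
      intro he
      exact hne (by rw [← he]; simp)
    omega
  rcases le_or_gt (π⁻¹ (m+1)) m with hble | hbgt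
  · -- b ≤ m, so a < b ≤ m
    have hvlt : π v < m := hva (by omega)
    have hm2 : 2 ≤ m := by omega
    exact hA.1 m hm2 hm.2
      (idx_m_first (mem_t hnt hmem (by omega) (by omega) (by omega)) hnt)
      ⟨π⁻¹ m, π⁻¹ (m+1), v, ha.1, hd, by omega, hv2, hπa, by omega, hvlt⟩
  · have hπxb : π x ≠ m + 1 := by
      intro he
      have : x = π⁻¹ (m+1) := by rw [← he]; simp
      omega
    rcases le_or_gt (π⁻¹ m) m with hale | hagt
    · -- a ≤ m < b
      have hπx2 : m + 1 < π x := by omega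
      have hmn : m + 1 ≤ n - 1 := by
        have := (app_mem_Icc hπ (v := x) hx1 (by omega)).2
        omega
      have hvlt : π v < m := hva (by omega)
      have hvb : v ≠ π⁻¹ (m+1) := by
        intro he
        rw [he, hπb] at hv4
        omega
      rcases lt_or_gt_of_ne hvb with hvb' | hvb'
      · exact hA.2 (m+1) (by omega) hmn
          (by rw [show m + 1 - 1 = m from rfl]
              exact idx_m_first (mem_t hnt hmem (by omega) (by omega) (by omega)) hnt)
          ⟨x, v, π⁻¹ (m+1), hx1, by omega, hvb', hb.2, hπx2, by omega, hπb⟩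
      · have hm2 : 2 ≤ m := by
          have := (app_mem_Icc hπ (v := v) (by omega) (by omega)).1
          omega
        exact hA.1 m hm2 hm.2
          (idx_m_first (mem_t hnt hmem (by omega) (by omega) (by omega)) hnt)
          ⟨π⁻¹ m, π⁻¹ (m+1), v, ha.1, hd, hvb', hv2, hπa, by omega, hvlt⟩
    · -- m < a < b
      have hπx2 : m + 1 < π x := by
        have : π x ≠ m + 1 := hπxb
        have : π x ≠ m := by
          intro he
          have : x = π⁻¹ m := by rw [← he]; simp
          omega
        omega
      have hmn : m + 1 ≤ n - 1 := by
        have := (app_mem_Icc hπ (v := x) hx1 (by omega)).2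
        omega
      exact hA.2 (m+1) (by omega) hmn
        (by rw [show m + 1 - 1 = m from rfl]
            exact idx_m_first (mem_t hnt hmem (by omega) (by omega) (by omega)) hnt)
        ⟨x, π⁻¹ m, π⁻¹ (m+1), hx1, by omega, hd, hb.2, hπx2, by omega, hπb⟩

lemma avoids_rotate_ascent (hπ : Supp n π) (hnt : m ∉ t)
    (hmem : ∀ a : ℕ, a ∈ m :: t ↔ a ∈ Finset.Icc 1 (n-1))
    (hd : π⁻¹ m < π⁻¹ (m+1)) :
    Avoids n (m :: t) π ↔ (∀ x, x ≤ m → π x ≤ m) ∧ Avoids n (t ++ [m]) π := by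
  have hm : 1 ≤ m ∧ m ≤ n - 1 := by simpa using (hmem m).mp (by simp)
  have hn2 : 2 ≤ n := by omega
  -- patterns killed by the block property
  have noU_m : (∀ x, x ≤ m → π x ≤ m) →
      ¬∃ p q r : ℕ, 1 ≤ p ∧ p < q ∧ q < r ∧ r ≤ n ∧ π p = m ∧ m < π q ∧ π r < m := by
    rintro hB ⟨p, q, r, h1, h2, h3, h4, h5, h6, h7⟩
    have hq : ¬ q ≤ m := fun hq' => by have := hB q hq'; omega
    have hr : r ≤ m := by
      have := block_inv hB (π r) (by omega)
      simpa using this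
    omega
  have noU_m1 : (∀ x, x ≤ m → π x ≤ m) →
      ¬∃ p q r : ℕ, 1 ≤ p ∧ p < q ∧ q < r ∧ r ≤ n ∧ π p = m+1 ∧ m+1 < π q ∧ π r < m+1 := by
    rintro hB ⟨p, q, r, h1, h2, h3, h4, h5, h6, h7⟩
    have hp : ¬ p ≤ m := fun hp' => by have := hB p hp'; omega
    have hr : r ≤ m := by
      have := block_inv hB (π r) (by omega)
      simpa using this
    omega
  have noD_m : (∀ x, x ≤ m → π x ≤ m) →
      ¬∃ p q r : ℕ, 1 ≤ p ∧ p < q ∧ q < r ∧ r ≤ n ∧ m < π p ∧ π q < m ∧ π r = m := by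
    rintro hB ⟨p, q, r, h1, h2, h3, h4, h5, h6, h7⟩
    have hp : ¬ p ≤ m := fun hp' => by have := hB p hp'; omega
    have hr : r ≤ m := by
      have := block_inv hB (π r) (by omega)
      simpa using this
    omega
  have noD_m1 : (∀ x, x ≤ m → π x ≤ m) →
      ¬∃ p q r : ℕ, 1 ≤ p ∧ p < q ∧ q < r ∧ r ≤ n ∧ m+1 < π p ∧ π q < m+1 ∧ π r = m+1 := by
    rintro hB ⟨p, q, r, h1, h2, h3, h4, h5, h6, h7⟩
    have hp : ¬ p ≤ m := fun hp' => by have := hB p hp'; omega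
    have hq : q ≤ m := by
      have := block_inv hB (π q) (by omega)
      simpa using this
    omega
  constructor
  · intro hA
    have hB := block_of_avoids hπ hnt hmem hd hA
    refine ⟨hB, ?_, ?_⟩
    · intro j h2 hjn hidx
      by_cases hjm : j = m
      · subst hjm
        exact noU_m hB
      · by_cases hjm1 : j = m + 1
        · subst hjm1
          exact noU_m1 hB
        · have hjt : j ∈ t := mem_t hnt hmem (by omega) hjn hjm
          have hj1t : j - 1 ∈ t := mem_t hnt hmem (by omega) (by omega) (by omega)
          exact hA.1 j h2 hjn ((idx_tr hnt hjt hj1t).mpr hidx)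
    · intro j h2 hjn hidx
      by_cases hjm : j = m
      · subst hjm
        exact noD_m hB
      · by_cases hjm1 : j = m + 1
        · subst hjm1
          exact noD_m1 hB
        · have hjt : j ∈ t := mem_t hnt hmem (by omega) hjn hjm
          have hj1t : j - 1 ∈ t := mem_t hnt hmem (by omega) (by omega) (by omega)
          exact hA.2 j h2 hjn ((idx_tr hnt hj1t hjt).mpr hidx)
  · rintro ⟨hB, hA⟩
    refine ⟨?_, ?_⟩
    · intro j h2 hjn hidx
      by_cases hjm : j = m
      · subst hjm
        exact noU_m hB
      · by_cases hjm1 : j = m + 1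
        · subst hjm1
          exact noU_m1 hB
        · have hjt : j ∈ t := mem_t hnt hmem (by omega) hjn hjm
          have hj1t : j - 1 ∈ t := mem_t hnt hmem (by omega) (by omega) (by omega)
          exact hA.1 j h2 hjn ((idx_tr hnt hjt hj1t).mp hidx)
    · intro j h2 hjn hidx
      by_cases hjm : j = m
      · subst hjm
        exact noD_m hB
      · by_cases hjm1 : j = m + 1
        · subst hjm1
          exact noD_m1 hB
        · have hjt : j ∈ t := mem_t hnt hmem (by omega) hjn hjm
          have hj1t : j - 1 ∈ t := mem_t hnt hmem (by omega) (by omega) (by omega)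
          exact hA.2 j h2 hjn ((idx_tr hnt hj1t hjt).mp hidx)

end Ascent

/-! ### main induction -/

lemma exists_descent {n : ℕ} {π : Equiv.Perm ℕ} (hπ : Supp n π) (hne : π ≠ 1) :
    ∃ j, 1 ≤ j ∧ j ≤ n - 1 ∧ π⁻¹ (j+1) < π⁻¹ j := by
  by_contra hno
  push_neg at hno
  apply hne
  have hstep : ∀ j, 1 ≤ j → j ≤ n - 1 → π⁻¹ j < π⁻¹ (j+1) := by
    intro j h1 h2
    have hne' : π⁻¹ j ≠ π⁻¹ (j+1) := fun he => absurd (π⁻¹.injective he) (by omega)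
    have := hno j h1 h2
    omega
  have hmono : ∀ x y, 1 ≤ x → y ≤ n → x < y → π⁻¹ x < π⁻¹ y := by
    intro x y hx
    induction y with
    | zero => omega
    | succ k ihk =>
      intro hy hxy
      rcases eq_or_lt_of_le (Nat.lt_succ_iff.mp hxy) with rfl | hlt
      · exact hstep x hx (by omega)
      · have h1 : π⁻¹ x < π⁻¹ k := ihk (by omega) hlt
        have h2 : π⁻¹ k < π⁻¹ (k+1) := hstep k (by omega) (by omega)
        omega
  have hmaps : ∀ x, 1 ≤ x → x ≤ n → 1 ≤ π⁻¹ x ∧ π⁻¹ x ≤ n := by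
    intro x h1 h2
    exact inv_mem_Icc hπ h1 h2
  have hid := strictMonoOn_id_Icc (fun x => π⁻¹ x) hmaps hmono
  have hinv1 : π⁻¹ = 1 := by
    ext x
    rcases le_or_gt x n with hle | hgt
    · rcases Nat.eq_zero_or_pos x with rfl | hx
      · simpa using hπ.inv 0 (by simp)
      · simpa using hid x hx hle
    · simpa using hπ.inv x (by simp; omega)
  rw [← inv_inv π, hinv1]; rfl

lemma avoids_one (n : ℕ) (c : List ℕ) : Avoids n c (1 : Equiv.Perm ℕ) := by
  constructor
  · rintro j h2 hjn hidx ⟨p, q, r, h1, hpq, hqr, hrn, h5, h6, h7⟩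
    simp only [Equiv.Perm.one_apply] at h5 h6 h7
    omega
  · rintro j h2 hjn hidx ⟨p, q, r, h1, hpq, hqr, hrn, h5, h6, h7⟩
    simp only [Equiv.Perm.one_apply] at h5 h6 h7
    omega

lemma csortable_one (n : ℕ) (c : List ℕ) : CSortable n c (1 : Equiv.Perm ℕ) := by
  refine ⟨[], by simp, by simp [List.Chain'], ?_⟩
  rw [isRWord_iff]
  refine ⟨by simp, rfl, by simp [inver_one]⟩

lemma main_induction : ∀ (N n : ℕ) (c : List ℕ) (π : Equiv.Perm ℕ),
    c.Nodup → (∀ a : ℕ, a ∈ c ↔ a ∈ Finset.Icc 1 (n-1)) → Supp n π →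
    inver n π * n + List.findIdx (fun j => decide (π⁻¹ (j+1) < π⁻¹ j)) c ≤ N →
    (CSortable n c π ↔ Avoids n c π) := by
  intro N
  induction N with
  | zero =>
    intro n c π hnd hmem hπ hN
    by_cases hone : π = 1
    · subst hone
      exact ⟨fun _ => avoids_one n c, fun _ => csortable_one n c⟩
    · exfalso
      obtain ⟨j, hj1, hj2, hjd⟩ := exists_descent hπ hone
      have hinv : inver n π ≠ 0 := by
        intro h0
        exact hone (eq_one_of_inver_eq_zero hπ h0)
      have hn2 : 2 ≤ n := by omega
      have : 1 * 2 ≤ inver n π * n := Nat.mul_le_mul (by omega) hn2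
      omega
  | succ N ih =>
    intro n c π hnd hmem hπ hN
    by_cases hone : π = 1
    · subst hone
      exact ⟨fun _ => avoids_one n c, fun _ => csortable_one n c⟩
    obtain ⟨j₀, hj01, hj02, hj0d⟩ := exists_descent hπ hone
    have hinvpos : 1 ≤ inver n π := by
      rcases Nat.eq_zero_or_pos (inver n π) with h0 | h
      · exact absurd (eq_one_of_inver_eq_zero hπ h0) hone
      · exact h
    have hn2 : 2 ≤ n := by omega
    have hj0c : j₀ ∈ c := (hmem j₀).mpr (by simp; omega)
    cases c with
    | nil => simp at hj0c
    | cons m t =>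
      have hm : 1 ≤ m ∧ m ≤ n - 1 := by simpa using (hmem m).mp (by simp)
      have hnt : m ∉ t := (List.nodup_cons.mp hnd).1
      have htnd : t.Nodup := (List.nodup_cons.mp hnd).2
      have hnd' : (t ++ [m]).Nodup := by
        rw [List.nodup_append]
        exact ⟨htnd, List.nodup_singleton m, by
          intro a hat b ham
          simp at ham
          subst ham
          exact fun h => hnt (h ▸ hat)⟩
      have hmem' : ∀ a : ℕ, a ∈ t ++ [m] ↔ a ∈ Finset.Icc 1 (n-1) := by
        intro a
        rw [← hmem a]
        simp [or_comm]
      have hlen : (m :: t).length = n - 1 := by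
        have htf : (m :: t).toFinset = Finset.Icc 1 (n-1) := by
          ext a
          rw [List.mem_toFinset]
          exact hmem a
        have hcard := List.toFinset_card_of_nodup hnd
        rw [htf, Nat.card_Icc] at hcard
        omega
      by_cases hdm : π⁻¹ (m+1) < π⁻¹ m
      · -- descent at the head letter
        have e1 := csortable_rotate_descent hπ (fun a ha => (hmem a).mp ha) hnt hdm
        have e2 := avoids_rotate_descent hπ hnt hmem hdm
        rw [e1, e2]
        set π' := Equiv.swap m (m+1) * π with hπ'def
        have hπ' : Supp n π' := Supp.mul (supp_swap hm.1 hm.2) hπ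
        have hinv' : inver n π' + 1 = inver n π := inver_swap_mul_descent hπ hm.1 hm.2 hdm
        apply ih n (t ++ [m]) π' hnd' hmem' hπ'
        have hd' : List.findIdx (fun j => decide (π'⁻¹ (j+1) < π'⁻¹ j)) (t ++ [m])
            ≤ n - 1 := by
          have h1 := List.findIdx_le_length (p := fun j => decide (π'⁻¹ (j+1) < π'⁻¹ j))
            (xs := t ++ [m])
          have h2 : (t ++ [m]).length = n - 1 := by
            simp only [List.length_append, List.length_cons, List.length_nil]
            simp only [List.length_cons] at hlen
            omega
          omega
        have hmul : inver n π' * n + n = inver n π * n := by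
          rw [← hinv']; ring
        omega
      · -- the head letter is not a descent
        have hdm' : π⁻¹ m < π⁻¹ (m+1) := by
          have hne' : π⁻¹ m ≠ π⁻¹ (m+1) := fun he => absurd (π⁻¹.injective he) (by omega)
          omega
        have e1 := csortable_rotate_ascent hπ (fun a ha => (hmem a).mp ha) hnt hdm'
        have e2 := avoids_rotate_ascent hπ hnt hmem hdm'
        rw [e1, e2]
        have key : CSortable n (t ++ [m]) π ↔ Avoids n (t ++ [m]) π := by
          apply ih n (t ++ [m]) π hnd' hmem' hπ
          set P := fun j => decide (π⁻¹ (j+1) < π⁻¹ j) with hP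
          have hj0t : j₀ ∈ t := by
            rcases List.mem_cons.mp hj0c with rfl | h
            · omega
            · exact h
          have hex : ∃ x ∈ t, P x = true := ⟨j₀, hj0t, by simpa [hP] using hj0d⟩
          have hlt := List.findIdx_lt_length_of_exists hex
          have hPm : P m = false := by simp [hP]; simp at hdm'; omega
          have hcons : List.findIdx P (m :: t) = List.findIdx P t + 1 := by
            rw [List.findIdx_cons, hPm]
            simp
          have happ : List.findIdx P (t ++ [m]) = List.findIdx P t := by
            rw [List.findIdx_append]
            simp [hlt]
          rw [happ]
          rw [hcons] at hN
          omega
        rw [key]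
  
end CSort

/-- Let `c` be a Coxeter element of `S_n` (each letter `s_1, …, s_{n-1}` exactly once)
and let `U_c, D_c` partition `[2, n-1]`, with `j ∈ U_c` iff `s_j` appears before
`s_{j-1}` in `c`.  A permutation `π ∈ S_n` is `c`-sortable if and only if `π` avoids the
patterns `jki` for all `j ∈ U_c` and `kij` for all `j ∈ D_c` (with `i < j < k`). -/
theorem c_sortable_iff_pattern_avoidance (n : ℕ) (c : List ℕ)
    (hnd : c.Nodup) (hmem : ∀ m : ℕ, m ∈ c ↔ m ∈ Finset.Icc 1 (n - 1))
    (π : Equiv.Perm ℕ) (hπ : ∀ x : ℕ, x ∉ Finset.Icc 1 n → π x = x) :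
    CSortable n c π ↔
      ((∀ j : ℕ, 2 ≤ j → j ≤ n - 1 → c.idxOf j < c.idxOf (j - 1) →
          ¬∃ p q r : ℕ, 1 ≤ p ∧ p < q ∧ q < r ∧ r ≤ n ∧
            π p = j ∧ j < π q ∧ π r < j) ∧
       (∀ j : ℕ, 2 ≤ j → j ≤ n - 1 → c.idxOf (j - 1) < c.idxOf j →
          ¬∃ p q r : ℕ, 1 ≤ p ∧ p < q ∧ q < r ∧ r ≤ n ∧
            j < π p ∧ π q < j ∧ π r = j)) :=
  CSort.main_induction
    (CSort.inver n π * n + List.findIdx (fun j => decide (π⁻¹ (j+1) < π⁻¹ j)) c)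
    n c π hnd hmem hπ le_rfl
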